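/- Consider ℝ^{2n} with coordinates (q^1,…,q^n,p_1,…,p_n), fix 0 ≤ k ≤ n, and let C = { p_{k+1} = … = p_n = 0 } ⊆ ℝ^{2n}. Say a smooth function f : ℝ^{2n} → ℝ lies in the N-component if ∂f/∂q^j vanishes at every point of C for every j ∈ {k+1,…,n}, and in the 0-component if f vanishes on C. For r ≥ 1 define the r-th coefficient of the standard-ordered star product by C_r(f,g) = (1/r!) Σ_{i_1,…,i_r=1}^{n} (∂^r f / ∂p_{i_1}⋯∂p_{i_r}) · (∂^r g / ∂q^{i_1}⋯∂q^{i_r}). Then for every r ≥ 1: (1) if f and g both lie in the N-component, then C_r(f,g) lies in the N-component; (2) if f lies in the 0-component and g in the N-component, or f lies in the N-component and g in the 0-component, then C_r(f,g) lies in the 0-component. In particular each C_r is a constraint bilinear map on smooth functions, so the standard-ordered star product is a constraint multiplication. -/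

import Mathlib

/-- The partial derivative in the direction of the coordinate `q^i` on
`ℝ^{2n} = (Fin n → ℝ) × (Fin n → ℝ)` (first factor: the `q`'s). -/
noncomputable def pderivQ {n : ℕ} (i : Fin n)
    (f : (Fin n → ℝ) × (Fin n → ℝ) → ℝ) : (Fin n → ℝ) × (Fin n → ℝ) → ℝ :=
  fun x => fderiv ℝ f x (Pi.single i 1, 0)

/-- The partial derivative in the direction of the coordinate `p_i` on
`ℝ^{2n} = (Fin n → ℝ) × (Fin n → ℝ)` (second factor: the `p`'s). -/
noncomputable def pderivP {n : ℕ} (i : Fin n)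
    (f : (Fin n → ℝ) × (Fin n → ℝ) → ℝ) : (Fin n → ℝ) × (Fin n → ℝ) → ℝ :=
  fun x => fderiv ℝ f x (0, Pi.single i 1)

/-- Iterated partial derivatives `∂^r/∂q^{i_1}⋯∂q^{i_r}`. -/
noncomputable def pderivsQ {n r : ℕ} (I : Fin r → Fin n)
    (f : (Fin n → ℝ) × (Fin n → ℝ) → ℝ) : (Fin n → ℝ) × (Fin n → ℝ) → ℝ :=
  (List.ofFn I).foldr pderivQ f

/-- Iterated partial derivatives `∂^r/∂p_{i_1}⋯∂p_{i_r}`. -/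
noncomputable def pderivsP {n r : ℕ} (I : Fin r → Fin n)
    (f : (Fin n → ℝ) × (Fin n → ℝ) → ℝ) : (Fin n → ℝ) × (Fin n → ℝ) → ℝ :=
  (List.ofFn I).foldr pderivP f

/-- Membership in the coisotropic subspace `C = {p_{k+1} = … = p_n = 0}`
(`0`-indexed: `p_j = 0` for `k ≤ j`). -/
def OnC {n : ℕ} (k : ℕ) (x : (Fin n → ℝ) × (Fin n → ℝ)) : Prop :=
  ∀ j : Fin n, k ≤ j.val → x.2 j = 0

/-- `f` lies in the `N`-component: `∂f/∂q^j` vanishes on `C` for all `j ∈ {k+1,…,n}`. -/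
def MemN {n : ℕ} (k : ℕ) (f : (Fin n → ℝ) × (Fin n → ℝ) → ℝ) : Prop :=
  ∀ j : Fin n, k ≤ j.val → ∀ x, OnC k x → pderivQ j f x = 0

/-- `f` lies in the `0`-component: `f` vanishes on `C`. -/
def MemZ {n : ℕ} (k : ℕ) (f : (Fin n → ℝ) × (Fin n → ℝ) → ℝ) : Prop :=
  ∀ x, OnC k x → f x = 0

/-- The `r`-th coefficient of the standard-ordered star product:
`C_r(f,g) = (1/r!) Σ_{i_1,…,i_r} (∂^r f/∂p_{i_1}⋯∂p_{i_r})·(∂^r g/∂q^{i_1}⋯∂q^{i_r})`. -/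
noncomputable def stdOrderedCoeff {n : ℕ} (r : ℕ)
    (f g : (Fin n → ℝ) × (Fin n → ℝ) → ℝ) : (Fin n → ℝ) × (Fin n → ℝ) → ℝ :=
  fun x => (1 / r.factorial : ℝ) * ∑ I : Fin r → Fin n, pderivsP I f x * pderivsQ I g x

section Aux

variable {n k : ℕ}

local notation "EE" => (Fin n → ℝ) × (Fin n → ℝ)

private lemma diff_of_smooth {f : EE → ℝ} (hf : ContDiff ℝ (⊤ : ℕ∞) f) :
    Differentiable ℝ f := hf.differentiable (by norm_cast)

private lemma smooth_dd {f : EE → ℝ} (hf : ContDiff ℝ (⊤ : ℕ∞) f) (v : EE) :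
    ContDiff ℝ (⊤ : ℕ∞) (fun x => fderiv ℝ f x v) :=
  (hf.fderiv_right (m := ((⊤:ℕ∞) : WithTop ℕ∞)) (by norm_cast)).clm_apply contDiff_const

private lemma smooth_pderivQ {f : EE → ℝ} (hf : ContDiff ℝ (⊤ : ℕ∞) f) (i : Fin n) :
    ContDiff ℝ (⊤ : ℕ∞) (pderivQ i f) := smooth_dd hf _

private lemma smooth_pderivP {f : EE → ℝ} (hf : ContDiff ℝ (⊤ : ℕ∞) f) (i : Fin n) :
    ContDiff ℝ (⊤ : ℕ∞) (pderivP i f) := smooth_dd hf _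

private lemma dd_eq {f : EE → ℝ} (hf : ContDiff ℝ (⊤ : ℕ∞) f) (v x : EE) :
    fderiv ℝ (fun y => fderiv ℝ f y v) x
      = (ContinuousLinearMap.apply ℝ ℝ v).comp (fderiv ℝ (fderiv ℝ f) x) := by
  have hd : DifferentiableAt ℝ (fderiv ℝ f) x :=
    ((hf.fderiv_right (m := ((⊤:ℕ∞) : WithTop ℕ∞)) (by norm_cast)).differentiable
      (by norm_cast)) x
  exact ((ContinuousLinearMap.apply ℝ ℝ v).hasFDerivAt.comp x hd.hasFDerivAt).fderiv

private lemma swap_dd {f : EE → ℝ} (hf : ContDiff ℝ (⊤ : ℕ∞) f) (v w x : EE) :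
    fderiv ℝ (fun y => fderiv ℝ f y v) x w = fderiv ℝ (fun y => fderiv ℝ f y w) x v := by
  have hsymm : IsSymmSndFDerivAt ℝ f x :=
    (hf.contDiffAt).isSymmSndFDerivAt (by rw [minSmoothness_of_isRCLikeNormedField]; norm_cast)
  rw [dd_eq hf v x, dd_eq hf w x]
  simpa using hsymm w v

/-- vanishing on C is preserved by derivatives in directions tangent to C. -/
private lemma zero_dd {h : EE → ℝ} (hZ : MemZ k h)
    {v : EE} (hv : OnC k v) {x : EE} (hx : OnC k x)
    (hd : DifferentiableAt ℝ h x) : fderiv ℝ h x v = 0 := by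
  have hline : HasDerivAt (fun t : ℝ => x + t • v) v 0 := by
    simpa using ((hasDerivAt_id (0:ℝ)).smul_const v).const_add x
  have hdx : DifferentiableAt ℝ h (x + (0:ℝ) • v) := by simpa using hd
  have hcomp : HasDerivAt (fun t : ℝ => h (x + t • v)) (fderiv ℝ h x v) 0 := by
    have := (hdx.hasFDerivAt).comp_hasDerivAt 0 hline
    simp only [zero_smul, add_zero] at this
    exact this
  have heq : (fun t : ℝ => h (x + t • v)) = fun _ => 0 := by
    funext t
    exact hZ _ (fun j hj => by simp [hx j hj, hv j hj])
  rw [heq] at hcomp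
  exact hcomp.unique (hasDerivAt_const 0 0)

private lemma onC_eQ (i : Fin n) : OnC k (((Pi.single i 1 : Fin n → ℝ), 0) : EE) :=
  fun j _ => rfl

private lemma onC_eP {i : Fin n} (hi : i.val < k) :
    OnC k ((0, (Pi.single i 1 : Fin n → ℝ)) : EE) := by
  intro j hj
  have : i ≠ j := fun h => absurd (h ▸ hj) (by omega)
  exact Pi.single_eq_of_ne (Ne.symm this) 1

private lemma memZ_pderivQ {h : EE → ℝ} (hh : ContDiff ℝ (⊤ : ℕ∞) h)
    (hZ : MemZ k h) (i : Fin n) : MemZ k (pderivQ i h) :=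
  fun x hx => zero_dd hZ (onC_eQ i) hx (diff_of_smooth hh x)

private lemma memZ_pderivP {h : EE → ℝ} (hh : ContDiff ℝ (⊤ : ℕ∞) h)
    (hZ : MemZ k h) {i : Fin n} (hi : i.val < k) : MemZ k (pderivP i h) :=
  fun x hx => zero_dd hZ (onC_eP hi) hx (diff_of_smooth hh x)

private lemma smooth_foldQ {g : EE → ℝ} (hg : ContDiff ℝ (⊤ : ℕ∞) g) (L : List (Fin n)) :
    ContDiff ℝ (⊤ : ℕ∞) (L.foldr pderivQ g) := by
  induction L with
  | nil => exact hg
  | cons i L ih => exact smooth_pderivQ ih i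

private lemma smooth_foldP {g : EE → ℝ} (hg : ContDiff ℝ (⊤ : ℕ∞) g) (L : List (Fin n)) :
    ContDiff ℝ (⊤ : ℕ∞) (L.foldr pderivP g) := by
  induction L with
  | nil => exact hg
  | cons i L ih => exact smooth_pderivP ih i

private lemma memZ_foldQ {g : EE → ℝ} (hg : ContDiff ℝ (⊤ : ℕ∞) g)
    (hZ : MemZ k g) (L : List (Fin n)) : MemZ k (L.foldr pderivQ g) := by
  induction L with
  | nil => exact hZ
  | cons i L ih => exact memZ_pderivQ (smooth_foldQ hg L) ih i

private lemma memZ_foldP {g : EE → ℝ} (hg : ContDiff ℝ (⊤ : ℕ∞) g)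
    (hZ : MemZ k g) {L : List (Fin n)} (hL : ∀ i ∈ L, i.val < k) :
    MemZ k (L.foldr pderivP g) := by
  induction L with
  | nil => exact hZ
  | cons i L ih =>
      exact memZ_pderivP (smooth_foldP hg L)
        (ih (fun j hj => hL j (List.mem_cons_of_mem i hj))) (hL i (List.mem_cons_self))

private lemma commQQ {g : EE → ℝ} (hg : ContDiff ℝ (⊤ : ℕ∞) g) (i j : Fin n) :
    pderivQ j (pderivQ i g) = pderivQ i (pderivQ j g) := by
  funext x; exact swap_dd hg _ _ x

private lemma commQP {g : EE → ℝ} (hg : ContDiff ℝ (⊤ : ℕ∞) g) (i j : Fin n) :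
    pderivQ j (pderivP i g) = pderivP i (pderivQ j g) := by
  funext x; exact swap_dd hg _ _ x

private lemma commQ_foldQ {g : EE → ℝ} (hg : ContDiff ℝ (⊤ : ℕ∞) g) (j : Fin n)
    (L : List (Fin n)) :
    pderivQ j (L.foldr pderivQ g) = L.foldr pderivQ (pderivQ j g) := by
  induction L with
  | nil => rfl
  | cons i L ih =>
      show pderivQ j (pderivQ i (L.foldr pderivQ g)) = pderivQ i (L.foldr pderivQ (pderivQ j g))
      rw [commQQ (smooth_foldQ hg L) i j, ih]

private lemma commQ_foldP {g : EE → ℝ} (hg : ContDiff ℝ (⊤ : ℕ∞) g) (j : Fin n)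
    (L : List (Fin n)) :
    pderivQ j (L.foldr pderivP g) = L.foldr pderivP (pderivQ j g) := by
  induction L with
  | nil => rfl
  | cons i L ih =>
      show pderivQ j (pderivP i (L.foldr pderivP g)) = pderivP i (L.foldr pderivP (pderivQ j g))
      rw [commQP (smooth_foldP hg L) i j, ih]

private lemma memZ_pderivQ_foldQ {g : EE → ℝ} (hg : ContDiff ℝ (⊤ : ℕ∞) g)
    (hN : MemN k g) {j : Fin n} (hj : k ≤ j.val) (L : List (Fin n)) :
    MemZ k (pderivQ j (L.foldr pderivQ g)) := by
  rw [commQ_foldQ hg j L]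
  exact memZ_foldQ (smooth_pderivQ hg j) (fun x hx => hN j hj x hx) L

private lemma memZ_foldQ_of_mem {g : EE → ℝ} (hg : ContDiff ℝ (⊤ : ℕ∞) g)
    (hN : MemN k g) {L : List (Fin n)} (hex : ∃ j ∈ L, k ≤ j.val) :
    MemZ k (L.foldr pderivQ g) := by
  induction L with
  | nil => exact absurd hex (by simp)
  | cons i L ih =>
      by_cases hi : k ≤ i.val
      · exact memZ_pderivQ_foldQ hg hN hi L
      · obtain ⟨j, hjL, hjk⟩ := hex
        rcases List.mem_cons.mp hjL with h | h
        · exact absurd (h ▸ hjk) hi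
        · exact memZ_pderivQ (smooth_foldQ hg L) (ih ⟨j, h, hjk⟩) i

end Aux

theorem stdOrdered_star_product_constraint (n k : ℕ) (hk : k ≤ n) :
    ∀ r : ℕ, 1 ≤ r → ∀ f g : (Fin n → ℝ) × (Fin n → ℝ) → ℝ,
      ContDiff ℝ (⊤ : ℕ∞) f → ContDiff ℝ (⊤ : ℕ∞) g →
      ((MemN k f → MemN k g → MemN k (stdOrderedCoeff r f g)) ∧
        ((MemZ k f ∧ MemN k g) ∨ (MemN k f ∧ MemZ k g) →
          MemZ k (stdOrderedCoeff r f g))) := by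
  intro r hr f g hf hg
  have hA : ∀ I : Fin r → Fin n, ContDiff ℝ (⊤ : ℕ∞) (pderivsP I f) :=
    fun I => smooth_foldP hf (List.ofFn I)
  have hB : ∀ I : Fin r → Fin n, ContDiff ℝ (⊤ : ℕ∞) (pderivsQ I g) :=
    fun I => smooth_foldQ hg (List.ofFn I)
  constructor
  · -- N × N → N
    intro hfN hgN j hj x hx
    have hdA : ∀ I : Fin r → Fin n, DifferentiableAt ℝ (pderivsP I f) x :=
      fun I => diff_of_smooth (hA I) x
    have hdB : ∀ I : Fin r → Fin n, DifferentiableAt ℝ (pderivsQ I g) x :=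
      fun I => diff_of_smooth (hB I) x
    have hdAB : ∀ I : Fin r → Fin n,
        DifferentiableAt ℝ (fun y => pderivsP I f y * pderivsQ I g y) x :=
      fun I => (hdA I).mul (hdB I)
    have hdS : DifferentiableAt ℝ
        (fun y => ∑ I : Fin r → Fin n, pderivsP I f y * pderivsQ I g y) x :=
      DifferentiableAt.fun_sum (fun I _ => hdAB I)
    show fderiv ℝ (fun y => (1 / r.factorial : ℝ) *
        ∑ I : Fin r → Fin n, pderivsP I f y * pderivsQ I g y) x (Pi.single j 1, 0) = 0
    rw [fderiv_const_mul hdS, ContinuousLinearMap.smul_apply,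
      fderiv_fun_sum (fun I _ => hdAB I), ContinuousLinearMap.sum_apply]
    have hzero : ∀ I : Fin r → Fin n,
        fderiv ℝ (fun y => pderivsP I f y * pderivsQ I g y) x (Pi.single j 1, 0) = 0 := by
      intro I
      rw [fderiv_fun_mul (hdA I) (hdB I), ContinuousLinearMap.add_apply,
        ContinuousLinearMap.smul_apply, ContinuousLinearMap.smul_apply]
      have hB0 : fderiv ℝ (pderivsQ I g) x (Pi.single j 1, 0) = 0 :=
        memZ_pderivQ_foldQ hg hgN hj (List.ofFn I) x hx
      rw [hB0]
      by_cases hex : ∃ l : Fin r, k ≤ (I l).val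
      · obtain ⟨l, hl⟩ := hex
        have : pderivsQ I g x = 0 :=
          memZ_foldQ_of_mem hg hgN ⟨I l, List.mem_ofFn.mpr ⟨l, rfl⟩, hl⟩ x hx
        simp [this]
      · have hall : ∀ i ∈ List.ofFn I, i.val < k := by
          intro i hi
          obtain ⟨l, rfl⟩ := List.mem_ofFn.mp hi
          exact lt_of_not_ge (fun h => hex ⟨l, h⟩)
        have hA0 : fderiv ℝ (pderivsP I f) x (Pi.single j 1, 0) = 0 := by
          have : pderivQ j (pderivsP I f) x = 0 := by
            show pderivQ j ((List.ofFn I).foldr pderivP f) x = 0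
            rw [commQ_foldP hf j (List.ofFn I)]
            exact memZ_foldP (smooth_pderivQ hf j) (fun y hy => hfN j hj y hy) hall x hx
          exact this
        simp [hA0]
    rw [Finset.sum_eq_zero (fun I _ => hzero I)]
    simp
  · -- Z component
    rintro (⟨hfZ, hgN⟩ | ⟨hfN, hgZ⟩) x hx
    · show (1 / r.factorial : ℝ) * ∑ I : Fin r → Fin n, pderivsP I f x * pderivsQ I g x = 0
      rw [Finset.sum_eq_zero, mul_zero]
      intro I _
      by_cases hex : ∃ l : Fin r, k ≤ (I l).val
      · obtain ⟨l, hl⟩ := hex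
        have : pderivsQ I g x = 0 :=
          memZ_foldQ_of_mem hg hgN ⟨I l, List.mem_ofFn.mpr ⟨l, rfl⟩, hl⟩ x hx
        rw [this, mul_zero]
      · have hall : ∀ i ∈ List.ofFn I, i.val < k := by
          intro i hi
          obtain ⟨l, rfl⟩ := List.mem_ofFn.mp hi
          exact lt_of_not_ge (fun h => hex ⟨l, h⟩)
        have : pderivsP I f x = 0 := memZ_foldP hf hfZ hall x hx
        rw [this, zero_mul]
    · show (1 / r.factorial : ℝ) * ∑ I : Fin r → Fin n, pderivsP I f x * pderivsQ I g x = 0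
      rw [Finset.sum_eq_zero, mul_zero]
      intro I _
      have : pderivsQ I g x = 0 := memZ_foldQ hg hgZ (List.ofFn I) x hx
      rw [this, mul_zero]
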